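/- Let α ∈ (0,1], q ≥ 1, x ∈ C^α([a,b], ℝ^ℓ), and let ε > 0 be such that (1−ε)/q + α > 1. Then for any two paths y, y' : [a,b] → L(ℝ^ℓ, ℝ^d) of finite q-variation and any [s,t] ⊂ [a,b], the Young integrals satisfy ‖∫_0^· y_u dx_u − ∫_0^· y'_u dx_u‖_{α,[s,t]} ≤ C ‖y − y'‖_{∞,[s,t]}^ε ( ‖y‖_{q-var,∞,[s,t]}^{1−ε} + ‖y'‖_{q-var,∞,[s,t]}^{1−ε} ) ‖x‖_{α,[s,t]}, for a constant C depending only on α, q and ε. -/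

import Mathlib

open Set

noncomputable section

abbrev Euc (n : ℕ) := EuclideanSpace ℝ (Fin n)

/-- A finite partition of the interval `[a, b]`, given by points
`a = t 0 ≤ t 1 ≤ ⋯ ≤ t n = b`. -/
structure PathPartition (a b : ℝ) where
  n : ℕ
  t : ℕ → ℝ
  npos : 0 < n
  first : t 0 = a
  last : t n = b
  mono : ∀ i, i < n → t i ≤ t (i + 1)

/-- The partition has mesh `< δ`. -/
def PathPartition.fine {a b : ℝ} (P : PathPartition a b) (δ : ℝ) : Prop :=
  ∀ i < P.n, P.t (i + 1) - P.t i < δ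

variable {E F : Type*} [NormedAddCommGroup E] [NormedSpace ℝ E]
  [NormedAddCommGroup F] [NormedSpace ℝ F]

/-- `∑_i ‖y_{t_{i+1}} - y_{t_i}‖^q` along a partition. -/
def pvarSum (q : ℝ) {a b : ℝ} (y : ℝ → E) (P : PathPartition a b) : ℝ :=
  ∑ i ∈ Finset.range P.n, ‖y (P.t (i + 1)) - y (P.t i)‖ ^ q

/-- The set of all `q`-variation sums of `y` over partitions of `[a,b]`. -/
def pvarSums (q a b : ℝ) (y : ℝ → E) : Set ℝ :=
  {r | ∃ P : PathPartition a b, r = pvarSum q y P}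

/-- `y` has finite `q`-variation on `[a,b]`. -/
def FinitePVar (q a b : ℝ) (y : ℝ → E) : Prop :=
  BddAbove (pvarSums q a b y)

/-- The `q`-variation seminorm of `y` on `[a,b]`. -/
def pVar (q a b : ℝ) (y : ℝ → E) : ℝ :=
  sSup (pvarSums q a b y) ^ (1 / q)

/-- The uniform norm of `y` on `[a,b]`. -/
def unifNorm (a b : ℝ) (y : ℝ → E) : ℝ :=
  sSup ((fun t => ‖y t‖) '' Icc a b)

/-- `C` is an `α`-Hölder constant for `x` on `[a,b]`. -/
def IsHolderWith (C α a b : ℝ) (x : ℝ → E) : Prop :=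
  ∀ s ∈ Icc a b, ∀ t ∈ Icc a b, ‖x t - x s‖ ≤ C * |t - s| ^ α

/-- Riemann sum of `y` against `x` along a partition. -/
def youngSum {a b : ℝ} (y : ℝ → E →L[ℝ] F) (x : ℝ → E) (P : PathPartition a b) : F :=
  ∑ i ∈ Finset.range P.n, y (P.t i) (x (P.t (i + 1)) - x (P.t i))

/-- `I` is the Young integral `∫_a^b y dx`: the Riemann sums converge to `I`
as the mesh tends to `0`. -/
def IsYoungIntegral (y : ℝ → E →L[ℝ] F) (x : ℝ → E) (a b : ℝ) (I : F) : Prop :=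
  ∀ ε > 0, ∃ δ > 0, ∀ P : PathPartition a b, P.fine δ → ‖youngSum y x P - I‖ < ε

end

noncomputable section Aux

open Finset in
theorem PathPartition.t_mono {a b : ℝ} (P : PathPartition a b) {i j : ℕ} (hij : i ≤ j) (hj : j ≤ P.n) :
    P.t i ≤ P.t j := by
  induction j with
  | zero => simp [Nat.le_zero.mp hij]
  | succ k ih =>
    rcases Nat.lt_or_ge i (k + 1) with h | h
    · exact le_trans (ih (Nat.lt_succ_iff.mp h) (by omega)) (P.mono k (by omega))
    · have : i = k + 1 := le_antisymm hij h
      simp [this]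

theorem PathPartition.le_ab {a b : ℝ} (P : PathPartition a b) : a ≤ b := by
  have := P.t_mono (Nat.zero_le P.n) le_rfl
  rwa [P.first, P.last] at this

theorem PathPartition.t_mem {a b : ℝ} (P : PathPartition a b) {i : ℕ} (hi : i ≤ P.n) :
    P.t i ∈ Icc a b := by
  constructor
  · have := P.t_mono (Nat.zero_le i) hi; rwa [P.first] at this
  · have := P.t_mono hi le_rfl; rwa [P.last] at this

def PathPartition.single {a b : ℝ} (h : a ≤ b) : PathPartition a b where
  n := 1
  t := fun j => if j = 0 then a else b
  npos := one_pos
  first := rfl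
  last := rfl
  mono := fun i hi => by interval_cases i; simpa using h

def PathPartition.two {a c b : ℝ} (h1 : a ≤ c) (h2 : c ≤ b) : PathPartition a b where
  n := 2
  t := fun j => if j = 0 then a else if j = 1 then c else b
  npos := two_pos
  first := rfl
  last := rfl
  mono := fun i hi => by interval_cases i <;> simpa using by assumption

def PathPartition.extendL {a b a' : ℝ} (P : PathPartition a b) (h : a' ≤ a) : PathPartition a' b where
  n := P.n + 1
  t := fun j => if j = 0 then a' else P.t (j - 1)
  npos := Nat.succ_pos _
  first := rfl
  last := by simp [P.last]
  mono := fun i hi => by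
    match i with
    | 0 => simpa [P.first] using h
    | Nat.succ k => simpa using P.mono k (by omega)

def PathPartition.extendR {a b b' : ℝ} (P : PathPartition a b) (h : b ≤ b') : PathPartition a b' where
  n := P.n + 1
  t := fun j => if j ≤ P.n then P.t j else b'
  npos := Nat.succ_pos _
  first := by simp [P.first]
  last := by simp
  mono := fun i hi => by
    by_cases h1 : i + 1 ≤ P.n
    · rw [if_pos (by omega : i ≤ P.n), if_pos h1]; exact P.mono i (by omega)
    · have hiP : i = P.n := by omega
      rw [if_pos (by omega : i ≤ P.n), if_neg h1, hiP, P.last]; exact h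

theorem pvarSum_nonneg {E : Type*} [NormedAddCommGroup E] (q : ℝ) {a b : ℝ} (y : ℝ → E)
    (P : PathPartition a b) : 0 ≤ pvarSum q y P :=
  Finset.sum_nonneg fun _ _ => Real.rpow_nonneg (norm_nonneg _) q

theorem pvarSum_extendL_le {E : Type*} [NormedAddCommGroup E] [NormedSpace ℝ E]
    (q : ℝ) {a b a' : ℝ} (y : ℝ → E) (P : PathPartition a b) (h : a' ≤ a) :
    pvarSum q y P ≤ pvarSum q y (P.extendL h) := by
  unfold pvarSum PathPartition.extendL
  rw [Finset.sum_range_succ']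
  simp only [Nat.succ_ne_zero, if_neg, Nat.add_sub_cancel, reduceIte]
  exact le_add_of_nonneg_right (Real.rpow_nonneg (norm_nonneg _) q)

theorem pvarSum_extendR_le {E : Type*} [NormedAddCommGroup E] [NormedSpace ℝ E]
    (q : ℝ) {a b b' : ℝ} (y : ℝ → E) (P : PathPartition a b) (h : b ≤ b') :
    pvarSum q y P ≤ pvarSum q y (P.extendR h) := by
  unfold pvarSum PathPartition.extendR
  rw [Finset.sum_range_succ]
  refine le_add_of_le_of_nonneg (le_of_eq (Finset.sum_congr rfl fun i hi => ?_))
    (Real.rpow_nonneg (norm_nonneg _) q)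
  rw [Finset.mem_range] at hi
  dsimp only
  rw [if_pos (by omega : i + 1 ≤ P.n), if_pos (by omega : i ≤ P.n)]


theorem pvarSum_le_sSup {E : Type*} [NormedAddCommGroup E] [NormedSpace ℝ E]
    {q a b u v : ℝ} {y : ℝ → E} (h : FinitePVar q a b y) (hau : a ≤ u) (hvb : v ≤ b)
    (Q : PathPartition u v) : pvarSum q y Q ≤ sSup (pvarSums q a b y) := by
  calc pvarSum q y Q ≤ pvarSum q y (Q.extendL hau) := pvarSum_extendL_le q y Q hau
    _ ≤ pvarSum q y ((Q.extendL hau).extendR hvb) := pvarSum_extendR_le q y _ hvb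
    _ ≤ sSup (pvarSums q a b y) := le_csSup h ⟨(Q.extendL hau).extendR hvb, rfl⟩

theorem finitePVar_mono {E : Type*} [NormedAddCommGroup E] [NormedSpace ℝ E]
    {q a b u v : ℝ} {y : ℝ → E} (h : FinitePVar q a b y) (hau : a ≤ u) (hvb : v ≤ b) :
    FinitePVar q u v y := by
  refine ⟨sSup (pvarSums q a b y), ?_⟩
  rintro w ⟨Q, rfl⟩
  exact pvarSum_le_sSup h hau hvb Q

theorem sSup_pvarSums_nonneg {E : Type*} [NormedAddCommGroup E] [NormedSpace ℝ E]
    {q a b : ℝ} {y : ℝ → E} (h : FinitePVar q a b y) (hab : a ≤ b) :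
    0 ≤ sSup (pvarSums q a b y) :=
  le_trans (pvarSum_nonneg q y (PathPartition.single hab))
    (le_csSup h ⟨PathPartition.single hab, rfl⟩)

theorem norm_sub_le_of_finite {E : Type*} [NormedAddCommGroup E] [NormedSpace ℝ E]
    {q a b : ℝ} {y : ℝ → E} (h : FinitePVar q a b y) (hq : 0 < q) {w : ℝ} (hw : w ∈ Icc a b) :
    ‖y w - y a‖ ≤ sSup (pvarSums q a b y) ^ (1 / q) := by
  set S := sSup (pvarSums q a b y) with hS
  have hS0 : 0 ≤ S := sSup_pvarSums_nonneg h (hw.1.trans hw.2)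
  have key : ‖y w - y a‖ ^ q ≤ S := by
    have hmem : pvarSum q y (PathPartition.two hw.1 hw.2) ∈ pvarSums q a b y :=
      ⟨PathPartition.two hw.1 hw.2, rfl⟩
    have hsum : pvarSum q y (PathPartition.two hw.1 hw.2) =
        ‖y w - y a‖ ^ q + ‖y b - y w‖ ^ q := by
      unfold pvarSum PathPartition.two
      rw [Finset.sum_range_succ, Finset.sum_range_one]
      norm_num
    have := le_csSup h hmem
    rw [hsum] at this
    nlinarith [Real.rpow_nonneg (norm_nonneg (y b - y w)) q]
  calc ‖y w - y a‖ = (‖y w - y a‖ ^ q) ^ (1/q) := by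
        rw [← Real.rpow_mul (norm_nonneg _), mul_one_div_cancel hq.ne', Real.rpow_one]
    _ ≤ S ^ (1/q) := Real.rpow_le_rpow (Real.rpow_nonneg (norm_nonneg _) q) key
        (by positivity)

theorem bddAbove_norm_image {E : Type*} [NormedAddCommGroup E] [NormedSpace ℝ E]
    {q a b s t : ℝ} {y : ℝ → E} (h : FinitePVar q a b y) (hq : 0 < q)
    (has : a ≤ s) (htb : t ≤ b) :
    BddAbove ((fun w => ‖y w‖) '' Icc s t) := by
  refine ⟨‖y a‖ + sSup (pvarSums q a b y) ^ (1 / q), ?_⟩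
  rintro _ ⟨w, hw, rfl⟩
  have hw' : w ∈ Icc a b := ⟨has.trans hw.1, hw.2.trans htb⟩
  have := norm_sub_le_of_finite h hq hw'
  calc ‖y w‖ ≤ ‖y a‖ + ‖y w - y a‖ := by
        have := norm_sub_norm_le (y w) (y a); linarith [norm_sub_rev (y w) (y a) ▸ this,
          norm_le_insert' (y a) (y w)]
    _ ≤ _ := by linarith

theorem norm_le_unifNorm {E : Type*} [NormedAddCommGroup E] [NormedSpace ℝ E]
    {s t : ℝ} {y : ℝ → E} (hB : BddAbove ((fun w => ‖y w‖) '' Icc s t)) {w : ℝ}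
    (hw : w ∈ Icc s t) : ‖y w‖ ≤ unifNorm s t y :=
  le_csSup hB ⟨w, hw, rfl⟩

theorem unifNorm_nonneg' {E : Type*} [NormedAddCommGroup E] [NormedSpace ℝ E]
    {s t : ℝ} {y : ℝ → E} (hB : BddAbove ((fun w => ‖y w‖) '' Icc s t)) (hst : s ≤ t) :
    0 ≤ unifNorm s t y :=
  le_trans (norm_nonneg _) (norm_le_unifNorm hB ⟨le_rfl, hst⟩)

theorem unifNorm_le' {E : Type*} [NormedAddCommGroup E] [NormedSpace ℝ E]
    {s t M : ℝ} {y : ℝ → E} (hst : s ≤ t) (hM : ∀ w ∈ Icc s t, ‖y w‖ ≤ M) :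
    unifNorm s t y ≤ M := by
  refine csSup_le (by exact ⟨‖y s‖, ⟨s, ⟨le_rfl, hst⟩, rfl⟩⟩) ?_
  rintro _ ⟨w, hw, rfl⟩
  exact hM w hw

theorem real_rpow_add_le_add_rpow {x y p : ℝ} (hx : 0 ≤ x) (hy : 0 ≤ y)
    (hp0 : 0 ≤ p) (hp1 : p ≤ 1) : (x + y) ^ p ≤ x ^ p + y ^ p := by
  have h := NNReal.rpow_add_le_add_rpow x.toNNReal y.toNNReal hp0 hp1
  have h2 : ((x.toNNReal + y.toNNReal : NNReal) : ℝ) = x + y := by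
    simp [Real.coe_toNNReal x hx, Real.coe_toNNReal y hy]
  calc (x + y) ^ p = (((x.toNNReal + y.toNNReal : NNReal) : ℝ)) ^ p := by rw [h2]
    _ = (((x.toNNReal + y.toNNReal) ^ p : NNReal) : ℝ) := by
        rw [← NNReal.coe_rpow]
    _ ≤ ((x.toNNReal ^ p + y.toNNReal ^ p : NNReal) : ℝ) := by exact_mod_cast h
    _ = x ^ p + y ^ p := by
        push_cast [NNReal.coe_rpow, Real.coe_toNNReal x hx, Real.coe_toNNReal y hy]
        ring

def PathPartition.remove {a b : ℝ} (P : PathPartition a b) (i : ℕ) (h : i + 2 ≤ P.n) :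
    PathPartition a b where
  n := P.n - 1
  t := fun j => if j ≤ i then P.t j else P.t (j + 1)
  npos := by omega
  first := by rw [if_pos (Nat.zero_le i)]; exact P.first
  last := by
    rw [if_neg (by omega : ¬ P.n - 1 ≤ i)]
    have hh : P.n - 1 + 1 = P.n := by omega
    rw [hh]; exact P.last
  mono := fun j hj => by
    by_cases h1 : j + 1 ≤ i
    · rw [if_pos (by omega : j ≤ i), if_pos h1]; exact P.mono j (by omega)
    by_cases h2 : j ≤ i
    · rw [if_pos h2, if_neg h1]
      have hji : j = i := by omega
      subst hji
      exact le_trans (P.mono j (by omega)) (P.mono (j + 1) (by omega))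
    · rw [if_neg h2, if_neg (by omega : ¬ j + 1 ≤ i)]
      exact P.mono (j + 1) (by omega)

theorem PathPartition.remove_n {a b : ℝ} (P : PathPartition a b) (i : ℕ) (h : i + 2 ≤ P.n) :
    (P.remove i h).n = P.n - 1 := rfl

theorem youngSum_remove {E F : Type*} [NormedAddCommGroup E] [NormedSpace ℝ E]
    [NormedAddCommGroup F] [NormedSpace ℝ F]
    (z : ℝ → E →L[ℝ] F) (x : ℝ → E) {a b : ℝ} (P : PathPartition a b) (i : ℕ)
    (h : i + 2 ≤ P.n) :
    youngSum z x P = youngSum z x (P.remove i h)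
      + (z (P.t (i + 1)) - z (P.t i)) (x (P.t (i + 2)) - x (P.t (i + 1))) := by
  set n := P.n with hn
  set f : ℕ → F := fun k => z (P.t k) (x (P.t (k + 1)) - x (P.t k)) with hf
  have hremove : youngSum z x (P.remove i h)
      = (∑ j ∈ Finset.range i, f j)
        + (z (P.t i) (x (P.t (i + 2)) - x (P.t i)) + ∑ j ∈ Finset.Ico (i + 2) n, f j) := by
    unfold youngSum
    rw [PathPartition.remove_n]
    have hsplit : ∑ j ∈ Finset.range (n - 1),
          z ((P.remove i h).t j) (x ((P.remove i h).t (j + 1)) - x ((P.remove i h).t j))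
        = (∑ j ∈ Finset.range i,
            z ((P.remove i h).t j) (x ((P.remove i h).t (j + 1)) - x ((P.remove i h).t j)))
          + ∑ j ∈ Finset.Ico i (n - 1),
            z ((P.remove i h).t j) (x ((P.remove i h).t (j + 1)) - x ((P.remove i h).t j)) := by
      rw [Finset.range_eq_Ico,
        ← Finset.sum_Ico_consecutive _ (Nat.zero_le i) (by omega : i ≤ n - 1), ← Finset.range_eq_Ico]
    rw [hsplit]
    congr 1
    · refine Finset.sum_congr rfl fun j hj => ?_
      rw [Finset.mem_range] at hj
      show z (if j ≤ i then P.t j else P.t (j+1)) (x (if j + 1 ≤ i then P.t (j+1) else P.t (j+2))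
          - x (if j ≤ i then P.t j else P.t (j+1))) = f j
      rw [if_pos (by omega : j ≤ i), if_pos (by omega : j + 1 ≤ i)]
    · rw [Finset.sum_eq_sum_Ico_succ_bot (by omega : i < n - 1)]
      congr 1
      · show z (if i ≤ i then P.t i else P.t (i+1)) (x (if i + 1 ≤ i then P.t (i+1) else P.t (i+2))
            - x (if i ≤ i then P.t i else P.t (i+1))) = _
        rw [if_pos le_rfl, if_neg (by omega)]
      · rw [Finset.sum_Ico_eq_sum_range, Finset.sum_Ico_eq_sum_range]
        have : n - 1 - (i + 1) = n - (i + 2) := by omega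
        rw [this]
        refine Finset.sum_congr rfl fun j hj => ?_
        show z (if i + 1 + j ≤ i then P.t (i+1+j) else P.t (i+1+j+1))
            (x (if i + 1 + j + 1 ≤ i then P.t (i+1+j+1) else P.t (i+1+j+2))
              - x (if i + 1 + j ≤ i then P.t (i+1+j) else P.t (i+1+j+1))) = f (i + 2 + j)
        rw [if_neg (by omega), if_neg (by omega)]
        have e1 : i + 1 + j + 1 = i + 2 + j := by omega
        have e2 : i + 1 + j + 2 = i + 2 + j + 1 := by omega
        rw [e1, e2]
  have hP : youngSum z x P = (∑ j ∈ Finset.range i, f j)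
      + (f i + (f (i + 1) + ∑ j ∈ Finset.Ico (i + 2) n, f j)) := by
    unfold youngSum
    rw [Finset.range_eq_Ico,
      ← Finset.sum_Ico_consecutive _ (Nat.zero_le i) (by omega : i ≤ n),
      Finset.sum_eq_sum_Ico_succ_bot (by omega : i < n),
      Finset.sum_eq_sum_Ico_succ_bot (by omega : i + 1 < n), ← Finset.range_eq_Ico]
  rw [hP, hremove]
  simp only [hf, ContinuousLinearMap.sub_apply, map_sub]
  abel

theorem young_loeve {E F : Type*} [NormedAddCommGroup E] [NormedSpace ℝ E]
    [NormedAddCommGroup F] [NormedSpace ℝ F]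
    {α r θ : ℝ} (hα : 0 < α) (hr : 0 < r) (hθdef : θ = 1 / r + α) (hθ1 : 1 < θ)
    {u v : ℝ} (x : ℝ → E) {K : ℝ} (hK : 0 ≤ K)
    (hx : ∀ p q : ℝ, u ≤ p → p ≤ q → q ≤ v → ‖x q - x p‖ ≤ K * (q - p) ^ α)
    (z : ℝ → E →L[ℝ] F) {A : ℝ} (hA0 : 0 ≤ A)
    (hA : ∀ Q : PathPartition u v, pvarSum r z Q ≤ A)
    (P : PathPartition u v) :
    ‖youngSum z x P - z u (x v - x u)‖
      ≤ (∑' k : ℕ, ((k : ℝ) + 1) ^ (-θ)) * (A ^ (1 / r) * (K * (v - u) ^ α)) := by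
  have huv : u ≤ v := P.le_ab
  have hθ0 : (0:ℝ) < θ := lt_trans one_pos hθ1
  set W : ℝ := A ^ (1 / r) * (K * (v - u) ^ α) with hW
  have hW0 : 0 ≤ W := by
    apply mul_nonneg (Real.rpow_nonneg hA0 _)
    exact mul_nonneg hK (Real.rpow_nonneg (by linarith) _)
  have main : ∀ n : ℕ, ∀ P : PathPartition u v, P.n = n →
      ‖youngSum z x P - z u (x v - x u)‖
        ≤ (∑ k ∈ Finset.range (n - 1), ((k : ℝ) + 1) ^ (-θ)) * W := by
    intro n
    induction n using Nat.strong_induction_on with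
    | _ n IH =>
      intro P hPn
      match n, hPn with
      | 0, hPn => exact absurd hPn (by have := P.npos; omega)
      | 1, hPn =>
        have : youngSum z x P = z u (x v - x u) := by
          unfold youngSum
          rw [hPn, Finset.sum_range_one]
          have h0 : P.t 0 = u := P.first
          have h1 : P.t 1 = v := by rw [← hPn]; exact P.last
          rw [h0, h1]
        simp [this]
      | (m + 2), hPn =>
        set c : ℕ → ℝ := fun j =>
          ‖(z (P.t (j + 1)) - z (P.t j)) (x (P.t (j + 2)) - x (P.t (j + 1)))‖ with hc
        obtain ⟨i, hi, hmin⟩ := Finset.exists_min_image (Finset.range (m + 1)) c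
          ⟨0, Finset.mem_range.mpr (Nat.succ_pos m)⟩
        rw [Finset.mem_range] at hi
        have hi2 : i + 2 ≤ P.n := by omega
        set P' := P.remove i hi2 with hP'
        have hP'n : P'.n = m + 1 := by rw [hP', PathPartition.remove_n]; omega
        have htmem : ∀ j, j ≤ m + 2 → P.t j ∈ Icc u v := fun j hj => P.t_mem (by omega)
        set a : ℕ → ℝ := fun j => ‖z (P.t (j + 1)) - z (P.t j)‖ with ha
        set bb : ℕ → ℝ := fun j => K * (P.t (j + 2) - P.t (j + 1)) ^ α with hbb
        have ha0 : ∀ j, 0 ≤ a j := fun j => norm_nonneg _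
        have hΔ0 : ∀ j ∈ Finset.range (m + 1), 0 ≤ P.t (j + 2) - P.t (j + 1) := by
          intro j hj
          rw [Finset.mem_range] at hj
          have := P.t_mono (Nat.le_succ (j + 1)) (by omega)
          linarith
        have hbb0 : ∀ j ∈ Finset.range (m + 1), 0 ≤ bb j := fun j hj =>
          mul_nonneg hK (Real.rpow_nonneg (hΔ0 j hj) _)
        have hcb : ∀ j ∈ Finset.range (m + 1), c j ≤ a j * bb j := by
          intro j hj
          rw [Finset.mem_range] at hj
          refine le_trans (ContinuousLinearMap.le_opNorm _ _) ?_
          refine mul_le_mul_of_nonneg_left ?_ (ha0 j)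
          exact hx (P.t (j + 1)) (P.t (j + 2)) (htmem (j + 1) (by omega)).1
            (P.t_mono (Nat.le_succ (j + 1)) (by omega)) (htmem (j + 2) (by omega)).2
        have hrθ : r * θ = 1 + r * α := by rw [hθdef]; field_simp
        have hconj : Real.HolderConjugate (r * θ) (θ / α) := by
          rw [Real.holderConjugate_iff]; constructor
          · nlinarith
          · rw [hθdef]; field_simp
        have holder := Real.inner_le_Lp_mul_Lq_of_nonneg (s := Finset.range (m + 1)) hconj
          (f := fun j => a j ^ (1 / θ)) (g := fun j => bb j ^ (1 / θ))
          (fun j _ => Real.rpow_nonneg (ha0 j) _)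
          (fun j hj => Real.rpow_nonneg (hbb0 j hj) _)
        have e1 : ∀ j ∈ Finset.range (m + 1), (a j ^ (1 / θ)) ^ (r * θ) = a j ^ r := by
          intro j _
          rw [← Real.rpow_mul (ha0 j)]
          congr 1
          field_simp
        have e2 : ∀ j ∈ Finset.range (m + 1), (bb j ^ (1 / θ)) ^ (θ / α) = bb j ^ (1 / α) := by
          intro j hj
          rw [← Real.rpow_mul (hbb0 j hj)]
          congr 1
          field_simp
        rw [Finset.sum_congr rfl e1, Finset.sum_congr rfl e2] at holder
        have hAsum : ∑ j ∈ Finset.range (m + 1), a j ^ r ≤ A := by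
          refine le_trans ?_ (hA P)
          unfold pvarSum
          rw [hPn]
          refine Finset.sum_le_sum_of_subset_of_nonneg
            (Finset.range_subset_range.mpr (by omega)) ?_
          intro j _ _
          exact Real.rpow_nonneg (norm_nonneg _) r
        have hBsum : ∑ j ∈ Finset.range (m + 1), bb j ^ (1 / α) ≤ K ^ (1 / α) * (v - u) := by
          have ebb : ∀ j ∈ Finset.range (m + 1),
              bb j ^ (1 / α) = K ^ (1 / α) * (P.t (j + 2) - P.t (j + 1)) := by
            intro j hj
            rw [hbb]
            dsimp only
            rw [Real.mul_rpow hK (Real.rpow_nonneg (hΔ0 j hj) _),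
              ← Real.rpow_mul (hΔ0 j hj), mul_one_div_cancel hα.ne', Real.rpow_one]
          rw [Finset.sum_congr rfl ebb, ← Finset.mul_sum]
          refine mul_le_mul_of_nonneg_left ?_ (Real.rpow_nonneg hK _)
          have tele : ∑ j ∈ Finset.range (m + 1), (P.t (j + 2) - P.t (j + 1))
              = P.t (m + 2) - P.t 1 := Finset.sum_range_sub (fun j => P.t (j + 1)) (m + 1)
          rw [tele]
          have h1 : u ≤ P.t 1 := (htmem 1 (by omega)).1
          have h2 : P.t (m + 2) = v := by rw [← hPn]; exact P.last
          linarith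
        set T : ℝ := A ^ (1 / (r * θ)) * (K ^ (1 / α) * (v - u)) ^ (α / θ) with hT
        have hKv0 : 0 ≤ K ^ (1 / α) * (v - u) :=
          mul_nonneg (Real.rpow_nonneg hK _) (by linarith)
        have hT0 : 0 ≤ T := mul_nonneg (Real.rpow_nonneg hA0 _) (Real.rpow_nonneg hKv0 _)
        have hsum_le : ∑ j ∈ Finset.range (m + 1), c j ^ (1 / θ) ≤ T := by
          have step1 : ∑ j ∈ Finset.range (m + 1), c j ^ (1 / θ)
              ≤ ∑ j ∈ Finset.range (m + 1), a j ^ (1 / θ) * bb j ^ (1 / θ) := by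
            refine Finset.sum_le_sum fun j hj => ?_
            rw [← Real.mul_rpow (ha0 j) (hbb0 j hj)]
            exact Real.rpow_le_rpow (norm_nonneg _) (hcb j hj) (by positivity)
          refine le_trans step1 (le_trans holder ?_)
          rw [hT, one_div_div]
          have hsa : 0 ≤ ∑ j ∈ Finset.range (m + 1), a j ^ r :=
            Finset.sum_nonneg fun j _ => Real.rpow_nonneg (ha0 j) _
          have hsb : 0 ≤ ∑ j ∈ Finset.range (m + 1), bb j ^ (1 / α) :=
            Finset.sum_nonneg fun j hj => Real.rpow_nonneg (hbb0 j hj) _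
          refine mul_le_mul (Real.rpow_le_rpow hsa hAsum (by positivity))
            (Real.rpow_le_rpow hsb hBsum (by positivity))
            (Real.rpow_nonneg hsb _) (Real.rpow_nonneg hA0 _)
        have hcnt : ((m : ℝ) + 1) * c i ^ (1 / θ) ≤ T := by
          have heq : ((m : ℝ) + 1) * c i ^ (1 / θ)
              = ∑ _j ∈ Finset.range (m + 1), c i ^ (1 / θ) := by
            rw [Finset.sum_const, Finset.card_range, nsmul_eq_mul]
            push_cast
            ring
          rw [heq]
          refine le_trans (Finset.sum_le_sum fun j hj =>
            Real.rpow_le_rpow (norm_nonneg _) (hmin j hj) (by positivity)) hsum_le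
        have hm1 : (0:ℝ) < (m : ℝ) + 1 := by positivity
        have hTθ : T ^ θ = W := by
          rw [hT, Real.mul_rpow (Real.rpow_nonneg hA0 _) (Real.rpow_nonneg hKv0 _),
            ← Real.rpow_mul hA0, ← Real.rpow_mul hKv0]
          have ee1 : 1 / (r * θ) * θ = 1 / r := by
            rw [one_div, mul_inv, mul_assoc, inv_mul_cancel₀ hθ0.ne', mul_one, one_div]
          have ee2 : α / θ * θ = α := div_mul_cancel₀ α hθ0.ne'
          rw [ee1, ee2, hW,
            Real.mul_rpow (Real.rpow_nonneg hK _) (by linarith : (0:ℝ) ≤ v - u),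
            ← Real.rpow_mul hK, one_div_mul_cancel hα.ne', Real.rpow_one]
        have hci : c i ≤ W * ((m : ℝ) + 1) ^ (-θ) := by
          have h1 : c i ^ (1 / θ) ≤ T / ((m : ℝ) + 1) := by
            rw [le_div_iff₀ hm1]
            calc c i ^ (1 / θ) * ((m : ℝ) + 1) = ((m : ℝ) + 1) * c i ^ (1 / θ) := by ring
              _ ≤ T := hcnt
          calc c i = (c i ^ (1 / θ)) ^ θ := by
                rw [← Real.rpow_mul (norm_nonneg _), one_div_mul_cancel hθ0.ne',
                  Real.rpow_one]
            _ ≤ (T / ((m : ℝ) + 1)) ^ θ :=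
                Real.rpow_le_rpow (Real.rpow_nonneg (norm_nonneg _) _) h1 hθ0.le
            _ = T ^ θ * ((m : ℝ) + 1) ^ (-θ) := by
                rw [Real.div_rpow hT0 hm1.le, Real.rpow_neg hm1.le, div_eq_mul_inv]
            _ = W * ((m : ℝ) + 1) ^ (-θ) := by rw [hTθ]
        -- induction step
        have hid := youngSum_remove z x P i hi2
        have hIH := IH (m + 1) (by omega) P' hP'n
        have htri : ‖youngSum z x P - z u (x v - x u)‖
            ≤ ‖youngSum z x P' - z u (x v - x u)‖ + c i := by
          calc ‖youngSum z x P - z u (x v - x u)‖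
              = ‖(youngSum z x P' - z u (x v - x u))
                + (z (P.t (i + 1)) - z (P.t i)) (x (P.t (i + 2)) - x (P.t (i + 1)))‖ := by
                rw [hid]; congr 1; abel
            _ ≤ _ := norm_add_le _ _
        have hsplit : ∑ k ∈ Finset.range (m + 2 - 1), ((k : ℝ) + 1) ^ (-θ)
            = (∑ k ∈ Finset.range (m + 1 - 1), ((k : ℝ) + 1) ^ (-θ))
              + ((m : ℝ) + 1) ^ (-θ) := by
          show ∑ k ∈ Finset.range (m + 1), ((k : ℝ) + 1) ^ (-θ)
            = (∑ k ∈ Finset.range m, ((k : ℝ) + 1) ^ (-θ)) + ((m : ℝ) + 1) ^ (-θ)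
          rw [Finset.sum_range_succ]
        rw [hsplit, add_mul]
        have : c i ≤ ((m : ℝ) + 1) ^ (-θ) * W := by
          calc c i ≤ W * ((m : ℝ) + 1) ^ (-θ) := hci
            _ = ((m : ℝ) + 1) ^ (-θ) * W := by ring
        linarith [htri, hIH, this]
  have hsummable : Summable (fun k : ℕ => ((k : ℝ) + 1) ^ (-θ)) := by
    have h := Real.summable_nat_rpow.mpr (by linarith : -θ < -1)
    have h2 := (summable_nat_add_iff 1).mpr h
    simpa using h2
  refine le_trans (main P.n P rfl) ?_
  refine mul_le_mul_of_nonneg_right ?_ hW0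
  exact Summable.sum_le_tsum (Finset.range (P.n - 1))
    (fun k _ => Real.rpow_nonneg (by positivity) _) hsummable

theorem exists_fine_partition (u v : ℝ) (huv : u ≤ v) (δ : ℝ) (hδ : 0 < δ) :
    ∃ P : PathPartition u v, P.fine δ := by
  set n : ℕ := ⌊(v - u) / δ⌋₊ + 1 with hn
  have hn0 : 0 < n := Nat.succ_pos _
  have hn0' : (0:ℝ) < n := by exact_mod_cast hn0
  set cc : ℝ := (v - u) / n with hcc
  have hcc0 : 0 ≤ cc := div_nonneg (by linarith) hn0'.le
  have hccδ : cc < δ := by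
    rw [hcc, div_lt_iff₀ hn0']
    have hlt : (v - u) / δ < n := by
      rw [hn]; push_cast; exact Nat.lt_floor_add_one _
    rw [div_lt_iff₀ hδ] at hlt
    linarith
  refine ⟨⟨n, fun i => min (u + i * cc) v, hn0, ?_, ?_, ?_⟩, ?_⟩
  · simp [min_eq_left huv]
  · have : u + (n : ℝ) * cc = v := by
      rw [hcc]; field_simp; ring
    simp [this]
  · intro i hi
    refine min_le_min ?_ le_rfl
    push_cast
    nlinarith [hcc0]
  · intro i hi
    have key : min (u + (i + 1 : ℕ) * cc) v - min (u + i * cc) v ≤ cc := by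
      rcases le_total (u + (i:ℝ) * cc) v with h1 | h1
      · rw [min_eq_left h1]
        have : min (u + ((i + 1 : ℕ) : ℝ) * cc) v ≤ u + ((i + 1 : ℕ) : ℝ) * cc :=
          min_le_left _ _
        push_cast at this ⊢
        nlinarith
      · rw [min_eq_right h1, min_eq_right (by push_cast; nlinarith)]
        linarith
    linarith

theorem youngSum_sub {E F : Type*} [NormedAddCommGroup E] [NormedSpace ℝ E]
    [NormedAddCommGroup F] [NormedSpace ℝ F]
    (y y' : ℝ → E →L[ℝ] F) (x : ℝ → E) {a b : ℝ} (P : PathPartition a b) :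
    youngSum (fun w => y w - y' w) x P = youngSum y x P - youngSum y' x P := by
  unfold youngSum
  rw [← Finset.sum_sub_distrib]
  exact Finset.sum_congr rfl fun i _ => by simp

theorem isYoungIntegral_sub {E F : Type*} [NormedAddCommGroup E] [NormedSpace ℝ E]
    [NormedAddCommGroup F] [NormedSpace ℝ F]
    {y y' : ℝ → E →L[ℝ] F} {x : ℝ → E} {u v : ℝ} {I I' : F}
    (hI : IsYoungIntegral y x u v I) (hI' : IsYoungIntegral y' x u v I') :
    IsYoungIntegral (fun w => y w - y' w) x u v (I - I') := by
  intro η hη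
  obtain ⟨δ1, hδ1, H1⟩ := hI (η / 2) (by linarith)
  obtain ⟨δ2, hδ2, H2⟩ := hI' (η / 2) (by linarith)
  refine ⟨min δ1 δ2, lt_min hδ1 hδ2, fun P hP => ?_⟩
  have hP1 : P.fine δ1 := fun i hi => lt_of_lt_of_le (hP i hi) (min_le_left _ _)
  have hP2 : P.fine δ2 := fun i hi => lt_of_lt_of_le (hP i hi) (min_le_right _ _)
  have := H1 P hP1
  have := H2 P hP2
  rw [youngSum_sub]
  calc ‖youngSum y x P - youngSum y' x P - (I - I')‖
      = ‖(youngSum y x P - I) - (youngSum y' x P - I')‖ := by congr 1; abel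
    _ ≤ ‖youngSum y x P - I‖ + ‖youngSum y' x P - I'‖ := norm_sub_le _ _
    _ < η / 2 + η / 2 := by apply add_lt_add <;> assumption
    _ = η := by ring

theorem isYoungIntegral_norm_le {E F : Type*} [NormedAddCommGroup E] [NormedSpace ℝ E]
    [NormedAddCommGroup F] [NormedSpace ℝ F]
    {y : ℝ → E →L[ℝ] F} {x : ℝ → E} {u v : ℝ} {I : F} (huv : u ≤ v)
    (hI : IsYoungIntegral y x u v I) {B : ℝ}
    (hB : ∀ P : PathPartition u v, ‖youngSum y x P‖ ≤ B) : ‖I‖ ≤ B := by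
  refine le_of_forall_pos_le_add fun η hη => ?_
  obtain ⟨δ, hδ, H⟩ := hI η hη
  obtain ⟨P, hPf⟩ := exists_fine_partition u v huv δ hδ
  have h1 := H P hPf
  calc ‖I‖ = ‖youngSum y x P - (youngSum y x P - I)‖ := by congr 1; abel
    _ ≤ ‖youngSum y x P‖ + ‖youngSum y x P - I‖ := norm_sub_le _ _
    _ ≤ B + η := add_le_add (hB P) h1.le

end Aux

/-- **Continuity estimate for the Young integral (Corollary A.2, second part).**
If `(1-ε)/q + α > 1`, `x ∈ C^α([a,b])` and `y, y'` have finite `q`-variation, then the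
Young integrals satisfy, on every `[s,t] ⊆ [a,b]`,
`‖∫_0^· y dx - ∫_0^· y' dx‖_{α,[s,t]} ≤ C ‖y-y'‖_{∞,[s,t]}^ε
  (‖y‖_{q-var,∞,[s,t]}^{1-ε} + ‖y'‖_{q-var,∞,[s,t]}^{1-ε}) ‖x‖_{α,[s,t]}`
for a constant `C` depending only on `α`, `q` and `ε`. -/
theorem young_integral_continuity_bound
    (α q ε : ℝ) (hα : 0 < α ∧ α ≤ 1) (hq : 1 ≤ q) (hε : 0 < ε)
    (hαqε : 1 < (1 - ε) / q + α) :
    ∃ C : ℝ, 0 < C ∧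
      ∀ (d ℓ : ℕ) (a b : ℝ), a ≤ b →
      ∀ (x : ℝ → Euc ℓ) (Kx : ℝ), 0 ≤ Kx → IsHolderWith Kx α a b x →
      ∀ y y' : ℝ → Euc ℓ →L[ℝ] Euc d, FinitePVar q a b y → FinitePVar q a b y' →
      ∀ I I' : ℝ → ℝ → Euc d,
        (∀ u v : ℝ, a ≤ u → u ≤ v → v ≤ b → IsYoungIntegral y x u v (I u v)) →
        (∀ u v : ℝ, a ≤ u → u ≤ v → v ≤ b → IsYoungIntegral y' x u v (I' u v)) →
        ∀ s t : ℝ, a ≤ s → s ≤ t → t ≤ b →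
        ∀ Kst : ℝ, 0 ≤ Kst → IsHolderWith Kst α s t x →
        ∀ u v : ℝ, s ≤ u → u ≤ v → v ≤ t →
          ‖I u v - I' u v‖
            ≤ C * unifNorm s t (fun r => y r - y' r) ^ ε
              * ((pVar q s t y + unifNorm s t y) ^ (1 - ε)
                  + (pVar q s t y' + unifNorm s t y') ^ (1 - ε))
              * Kst * (v - u) ^ α := by
  obtain ⟨hα0, hα1⟩ := hα
  have hq0 : (0:ℝ) < q := lt_of_lt_of_le one_pos hq
  have hε1 : ε < 1 := by
    have h2 : 0 < (1 - ε) / q := by linarith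
    rcases div_pos_iff.mp h2 with ⟨h3, _⟩ | ⟨_, h4⟩
    · linarith
    · linarith
  have h1ε : (0:ℝ) < 1 - ε := by linarith
  set r : ℝ := q / (1 - ε) with hrdef
  have hr0 : 0 < r := div_pos hq0 h1ε
  have h1r : 1 / r = (1 - ε) / q := by rw [hrdef, one_div_div]
  have hrq : q ≤ r := by
    rw [hrdef, le_div_iff₀ h1ε]; nlinarith
  set θ : ℝ := 1 / r + α with hθdef
  have hθ1 : 1 < θ := by rw [hθdef, h1r]; exact hαqε
  have hθ0 : (0:ℝ) < θ := lt_trans one_pos hθ1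
  set Cζ : ℝ := ∑' k : ℕ, ((k : ℝ) + 1) ^ (-θ) with hCζ
  have hCζ0 : 0 ≤ Cζ := tsum_nonneg fun k => Real.rpow_nonneg (by positivity) _
  refine ⟨1 + 2 * Cζ, by linarith, ?_⟩
  intro d ℓ a b hab x Kx hKx hxH y y' hy hy' I I' hI hI' s t has hst htb Kst hKst hKstH
    u v hsu huv hvt
  set z : ℝ → Euc ℓ →L[ℝ] Euc d := fun w => y w - y' w with hz
  -- basic facts
  have hys : FinitePVar q s t y := finitePVar_mono hy has htb
  have hy's : FinitePVar q s t y' := finitePVar_mono hy' has htb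
  set Sy : ℝ := sSup (pvarSums q s t y) with hSy
  set Sy' : ℝ := sSup (pvarSums q s t y') with hSy'
  have hSy0 : 0 ≤ Sy := sSup_pvarSums_nonneg hys hst
  have hSy'0 : 0 ≤ Sy' := sSup_pvarSums_nonneg hy's hst
  have hBy : BddAbove ((fun w => ‖y w‖) '' Icc s t) := bddAbove_norm_image hy hq0 has htb
  have hBy' : BddAbove ((fun w => ‖y' w‖) '' Icc s t) := bddAbove_norm_image hy' hq0 has htb
  set uY : ℝ := unifNorm s t y with huY
  set uY' : ℝ := unifNorm s t y' with huY'
  have huY0 : 0 ≤ uY := unifNorm_nonneg' hBy hst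
  have huY'0 : 0 ≤ uY' := unifNorm_nonneg' hBy' hst
  have hzb : ∀ w ∈ Icc s t, ‖z w‖ ≤ uY + uY' := by
    intro w hw
    refine le_trans (norm_sub_le _ _) ?_
    exact add_le_add (norm_le_unifNorm hBy hw) (norm_le_unifNorm hBy' hw)
  have hBz : BddAbove ((fun w => ‖z w‖) '' Icc s t) := by
    refine ⟨uY + uY', ?_⟩
    rintro _ ⟨w, hw, rfl⟩
    exact hzb w hw
  set Z : ℝ := unifNorm s t z with hZ
  have hZ0 : 0 ≤ Z := unifNorm_nonneg' hBz hst
  have hZle : Z ≤ uY + uY' := unifNorm_le' hst hzb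
  have hzw : ∀ w ∈ Icc s t, ‖z w‖ ≤ Z := fun w hw => norm_le_unifNorm hBz hw
  -- the q̃-variation bound for z
  set A : ℝ := (2 * Z) ^ (r - q) * (2 ^ q * (Sy + Sy')) with hA
  have h2Z0 : (0:ℝ) ≤ 2 * Z := by linarith
  have hA0 : 0 ≤ A :=
    mul_nonneg (Real.rpow_nonneg h2Z0 _)
      (mul_nonneg (Real.rpow_nonneg (by norm_num) _) (by linarith))
  have hAbd : ∀ Q : PathPartition u v, pvarSum r z Q ≤ A := by
    intro Q
    have hstep : ∀ j ∈ Finset.range Q.n,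
        ‖z (Q.t (j + 1)) - z (Q.t j)‖ ^ r
          ≤ (2 * Z) ^ (r - q) * (2 ^ q * (‖y (Q.t (j + 1)) - y (Q.t j)‖ ^ q
              + ‖y' (Q.t (j + 1)) - y' (Q.t j)‖ ^ q)) := by
      intro j hj
      rw [Finset.mem_range] at hj
      have hm1 : Q.t (j + 1) ∈ Icc s t := by
        have := Q.t_mem (by omega : j + 1 ≤ Q.n)
        exact ⟨hsu.trans this.1, this.2.trans hvt⟩
      have hm0 : Q.t j ∈ Icc s t := by
        have := Q.t_mem (by omega : j ≤ Q.n)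
        exact ⟨hsu.trans this.1, this.2.trans hvt⟩
      set dz := ‖z (Q.t (j + 1)) - z (Q.t j)‖ with hdz
      set dy := ‖y (Q.t (j + 1)) - y (Q.t j)‖ with hdy
      set dy' := ‖y' (Q.t (j + 1)) - y' (Q.t j)‖ with hdy'
      have hdz2Z : dz ≤ 2 * Z := by
        refine le_trans (norm_sub_le _ _) ?_
        have h1 := hzw _ hm1
        have h2 := hzw _ hm0
        linarith
      have hdzyy : dz ≤ dy + dy' := by
        have e : z (Q.t (j + 1)) - z (Q.t j)
            = (y (Q.t (j + 1)) - y (Q.t j)) - (y' (Q.t (j + 1)) - y' (Q.t j)) := by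
          simp only [hz]; abel
        rw [hdz, e]
        exact norm_sub_le _ _
      have hsplitr : dz ^ r = dz ^ (r - q) * dz ^ q := by
        rw [← Real.rpow_add' (norm_nonneg _) (by rw [sub_add_cancel]; exact hr0.ne'),
          sub_add_cancel]
      have h1 : dz ^ (r - q) ≤ (2 * Z) ^ (r - q) :=
        Real.rpow_le_rpow (norm_nonneg _) hdz2Z (by linarith)
      have h2 : dz ^ q ≤ 2 ^ q * (dy ^ q + dy' ^ q) := by
        rcases le_total dy dy' with hc | hc
        · have : dz ≤ 2 * dy' := by linarith
          calc dz ^ q ≤ (2 * dy') ^ q :=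
                Real.rpow_le_rpow (norm_nonneg _) this hq0.le
            _ = 2 ^ q * dy' ^ q := Real.mul_rpow (by norm_num) (norm_nonneg _)
            _ ≤ 2 ^ q * (dy ^ q + dy' ^ q) := by
                refine mul_le_mul_of_nonneg_left ?_ (Real.rpow_nonneg (by norm_num) _)
                have := Real.rpow_nonneg (norm_nonneg (y (Q.t (j+1)) - y (Q.t j))) q
                rw [← hdy] at this
                linarith
        · have : dz ≤ 2 * dy := by linarith
          calc dz ^ q ≤ (2 * dy) ^ q :=
                Real.rpow_le_rpow (norm_nonneg _) this hq0.le
            _ = 2 ^ q * dy ^ q := Real.mul_rpow (by norm_num) (norm_nonneg _)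
            _ ≤ 2 ^ q * (dy ^ q + dy' ^ q) := by
                refine mul_le_mul_of_nonneg_left ?_ (Real.rpow_nonneg (by norm_num) _)
                have := Real.rpow_nonneg (norm_nonneg (y' (Q.t (j+1)) - y' (Q.t j))) q
                rw [← hdy'] at this
                linarith
      calc dz ^ r = dz ^ (r - q) * dz ^ q := hsplitr
        _ ≤ (2 * Z) ^ (r - q) * (2 ^ q * (dy ^ q + dy' ^ q)) :=
            mul_le_mul h1 h2 (Real.rpow_nonneg (norm_nonneg _) _)
              (Real.rpow_nonneg h2Z0 _)
    calc pvarSum r z Q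
        ≤ ∑ j ∈ Finset.range Q.n, (2 * Z) ^ (r - q) * (2 ^ q * (‖y (Q.t (j + 1)) - y (Q.t j)‖ ^ q
            + ‖y' (Q.t (j + 1)) - y' (Q.t j)‖ ^ q)) := Finset.sum_le_sum hstep
      _ = (2 * Z) ^ (r - q) * (2 ^ q * (pvarSum q y Q + pvarSum q y' Q)) := by
          unfold pvarSum
          rw [← Finset.sum_add_distrib, ← Finset.mul_sum, ← Finset.mul_sum]
      _ ≤ A := by
          rw [hA]
          refine mul_le_mul_of_nonneg_left ?_ (Real.rpow_nonneg h2Z0 _)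
          refine mul_le_mul_of_nonneg_left ?_ (Real.rpow_nonneg (by norm_num) _)
          exact add_le_add (pvarSum_le_sSup hys hsu hvt Q) (pvarSum_le_sSup hy's hsu hvt Q)
  -- Hölder property of x on [u, v]
  have hxHolder : ∀ p pq : ℝ, u ≤ p → p ≤ pq → pq ≤ v → ‖x pq - x p‖ ≤ Kst * (pq - p) ^ α := by
    intro p pq h1 h2 h3
    have := hKstH p ⟨hsu.trans h1, (h2.trans h3).trans hvt⟩ pq
      ⟨hsu.trans (h1.trans h2), h3.trans hvt⟩
    rwa [abs_of_nonneg (by linarith)] at this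
  set KΔ : ℝ := Kst * (v - u) ^ α with hKΔ
  have hKΔ0 : 0 ≤ KΔ := mul_nonneg hKst (Real.rpow_nonneg (by linarith) _)
  -- the main estimate via Young–Lóeve
  have hkey : ∀ P : PathPartition u v, ‖youngSum z x P‖ ≤ Z * KΔ + Cζ * (A ^ (1 / r) * KΔ) := by
    intro P
    have h1 := young_loeve hα0 hr0 hθdef hθ1 x hKst hxHolder z hA0 hAbd P
    have h2 : ‖z u (x v - x u)‖ ≤ Z * KΔ := by
      calc ‖z u (x v - x u)‖ ≤ ‖z u‖ * ‖x v - x u‖ := ContinuousLinearMap.le_opNorm _ _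
        _ ≤ Z * KΔ := mul_le_mul (hzw u ⟨hsu, huv.trans hvt⟩)
            (hxHolder u v le_rfl huv le_rfl) (norm_nonneg _) hZ0
    calc ‖youngSum z x P‖
        = ‖z u (x v - x u) + (youngSum z x P - z u (x v - x u))‖ := by congr 1; abel
      _ ≤ ‖z u (x v - x u)‖ + ‖youngSum z x P - z u (x v - x u)‖ := norm_add_le _ _
      _ ≤ Z * KΔ + Cζ * (A ^ (1 / r) * KΔ) := add_le_add h2 h1
  have hIsub : IsYoungIntegral z x u v (I u v - I' u v) :=
    isYoungIntegral_sub (hI u v (has.trans hsu) huv (hvt.trans htb))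
      (hI' u v (has.trans hsu) huv (hvt.trans htb))
  have hmain : ‖I u v - I' u v‖ ≤ Z * KΔ + Cζ * (A ^ (1 / r) * KΔ) :=
    isYoungIntegral_norm_le huv hIsub hkey
  -- final algebra
  set Py : ℝ := pVar q s t y with hPy
  set Py' : ℝ := pVar q s t y' with hPy'
  have hPyS : Py = Sy ^ (1 / q) := rfl
  have hPy'S : Py' = Sy' ^ (1 / q) := rfl
  have hPy0 : 0 ≤ Py := by rw [hPyS]; exact Real.rpow_nonneg hSy0 _
  have hPy'0 : 0 ≤ Py' := by rw [hPy'S]; exact Real.rpow_nonneg hSy'0 _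
  set Y : ℝ := Py + uY with hY
  set Y' : ℝ := Py' + uY' with hY'
  have hY0 : 0 ≤ Y := add_nonneg hPy0 huY0
  have hY'0 : 0 ≤ Y' := add_nonneg hPy'0 huY'0
  set G : ℝ := Z ^ ε * (Y ^ (1 - ε) + Y' ^ (1 - ε)) with hG
  have he1 : ε + (1 - ε) = 1 := by ring
  have hsubYY : (Y + Y') ^ (1 - ε) ≤ Y ^ (1 - ε) + Y' ^ (1 - ε) :=
    real_rpow_add_le_add_rpow hY0 hY'0 (by linarith) (by linarith)
  have hZG : Z ≤ G := by
    have hZYY : Z ≤ Y + Y' := by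
      refine hZle.trans ?_
      rw [hY, hY']
      linarith
    have e : Z = Z ^ ε * Z ^ (1 - ε) := by
      rw [← Real.rpow_add' hZ0 (by rw [he1]; norm_num), he1, Real.rpow_one]
    rw [e, hG]
    refine mul_le_mul_of_nonneg_left ?_ (Real.rpow_nonneg hZ0 _)
    exact le_trans (Real.rpow_le_rpow hZ0 hZYY (by linarith)) hsubYY
  have hAr : A ^ (1 / r) ≤ 2 * G := by
    have hrq' : (r - q) * (1 / r) = ε := by
      rw [hrdef]; field_simp; ring
    have hqr' : q * (1 / r) = 1 - ε := by
      rw [hrdef]; field_simp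
    have h1r' : 1 / r = 1 / q * (1 - ε) := by rw [h1r]; ring
    have hSS0 : (0:ℝ) ≤ Sy + Sy' := by linarith
    have e0 : A ^ (1 / r) = (2 * Z) ^ ε * ((2:ℝ) ^ (1 - ε) * (Sy + Sy') ^ (1 / r)) := by
      rw [hA, Real.mul_rpow (Real.rpow_nonneg h2Z0 _)
          (mul_nonneg (Real.rpow_nonneg (by norm_num) _) hSS0),
        Real.mul_rpow (Real.rpow_nonneg (by norm_num) _) hSS0,
        ← Real.rpow_mul h2Z0, ← Real.rpow_mul (by norm_num : (0:ℝ) ≤ 2), hrq', hqr']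
    have eSS : (Sy + Sy') ^ (1 / r) ≤ (Y + Y') ^ (1 - ε) := by
      rw [h1r', Real.rpow_mul hSS0]
      refine Real.rpow_le_rpow (Real.rpow_nonneg hSS0 _) ?_ (by linarith)
      have hsubq : (Sy + Sy') ^ (1 / q) ≤ Sy ^ (1 / q) + Sy' ^ (1 / q) :=
        real_rpow_add_le_add_rpow hSy0 hSy'0 (by positivity)
          ((div_le_one hq0).mpr hq)
      refine hsubq.trans ?_
      rw [← hPyS, ← hPy'S, hY, hY']
      linarith
    have e2 : (2 * Z) ^ ε = 2 ^ ε * Z ^ ε := Real.mul_rpow (by norm_num) hZ0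
    have e3 : (2:ℝ) ^ ε * (2:ℝ) ^ (1 - ε) = 2 := by
      rw [← Real.rpow_add (by norm_num : (0:ℝ) < 2), he1, Real.rpow_one]
    calc A ^ (1 / r) = 2 ^ ε * Z ^ ε * ((2:ℝ) ^ (1 - ε) * (Sy + Sy') ^ (1 / r)) := by
          rw [e0, e2]
      _ ≤ 2 ^ ε * Z ^ ε * ((2:ℝ) ^ (1 - ε) * ((Y + Y') ^ (1 - ε))) := by
          refine mul_le_mul_of_nonneg_left ?_
            (mul_nonneg (Real.rpow_nonneg (by norm_num) _) (Real.rpow_nonneg hZ0 _))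
          exact mul_le_mul_of_nonneg_left eSS (Real.rpow_nonneg (by norm_num) _)
      _ ≤ 2 ^ ε * Z ^ ε * ((2:ℝ) ^ (1 - ε) * (Y ^ (1 - ε) + Y' ^ (1 - ε))) := by
          refine mul_le_mul_of_nonneg_left ?_
            (mul_nonneg (Real.rpow_nonneg (by norm_num) _) (Real.rpow_nonneg hZ0 _))
          exact mul_le_mul_of_nonneg_left hsubYY (Real.rpow_nonneg (by norm_num) _)
      _ = 2 * G := by
          rw [hG]
          linear_combination Z ^ ε * (Y ^ (1 - ε) + Y' ^ (1 - ε)) * e3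
  have hfin1 : Z * KΔ ≤ G * KΔ := mul_le_mul_of_nonneg_right hZG hKΔ0
  have hfin2 : Cζ * (A ^ (1 / r) * KΔ) ≤ Cζ * (2 * G * KΔ) :=
    mul_le_mul_of_nonneg_left (mul_le_mul_of_nonneg_right hAr hKΔ0) hCζ0
  have hgoal : (1 + 2 * Cζ) * Z ^ ε * (Y ^ (1 - ε) + Y' ^ (1 - ε)) * Kst * (v - u) ^ α
      = G * KΔ + Cζ * (2 * G * KΔ) := by
    rw [hG, hKΔ]; ring
  calc ‖I u v - I' u v‖ ≤ Z * KΔ + Cζ * (A ^ (1 / r) * KΔ) := hmain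
    _ ≤ G * KΔ + Cζ * (2 * G * KΔ) := add_le_add hfin1 hfin2
    _ = (1 + 2 * Cζ) * Z ^ ε * (Y ^ (1 - ε) + Y' ^ (1 - ε)) * Kst * (v - u) ^ α := hgoal.symm
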